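/- Let α > 0, let n ≥ 1, let K₁,…,K_n ≥ 0, and let G₁,…,G_n : ℝ → ℝ be measurable, nonnegative functions vanishing on (−∞,0) such that ∫₀^∞ G_i(t) dt = 1 and G_i(t) ≤ K_i · t^{−α} for all t > 0 and all i = 1,…,n. Then for all positive reals p₁,…,p_n with p₁+⋯+p_n = 1 and all t > 0, the n-fold convolution satisfies (G₁ ∗ ⋯ ∗ G_n)(t) ≤ (K₁·p₁^{−α} + ⋯ + K_n·p_n^{−α}) · t^{−α}. -/

import Mathlib

open Filter Set MeasureTheory

/-- Convolution of two functions vanishing on `(-∞,0)`: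
`(f ∗ g)(t) = ∫₀ᵗ f(s) g(t-s) ds`. -/
noncomputable def conv (f g : ℝ → ℝ) : ℝ → ℝ :=
  fun t => ∫ s in (0:ℝ)..t, f s * g (t - s)

lemma ae_ne_zero : ∀ᵐ (s : ℝ), s ≠ 0 := by
  rw [ae_iff]
  simpa using Real.volume_singleton (a := 0)

lemma conv_repr (f g : ℝ → ℝ) (hf : Measurable f) (hg : Measurable g)
    (hfnn : ∀ t, 0 ≤ f t) (hgnn : ∀ t, 0 ≤ g t) (hfz : ∀ t < (0:ℝ), f t = 0) (t : ℝ) :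
    conv f g t = (∫⁻ s in Ioc 0 t, ENNReal.ofReal (f s * g (t - s))).toReal := by
  rcases le_or_gt 0 t with ht | ht
  · rw [conv, intervalIntegral.integral_of_le ht]
    rw [MeasureTheory.integral_eq_lintegral_of_nonneg_ae]
    · exact Eventually.of_forall fun s => mul_nonneg (hfnn s) (hgnn _)
    · exact ((hf.mul (hg.comp (measurable_const.sub measurable_id))).aestronglyMeasurable)
  · have h1 : conv f g t = 0 := by
      rw [conv, intervalIntegral.integral_of_ge ht.le, neg_eq_zero]
      apply MeasureTheory.setIntegral_eq_zero_of_ae_eq_zero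
      filter_upwards [ae_ne_zero] with s hs0 hs
      have : s < 0 := lt_of_le_of_ne hs.2 hs0
      rw [hfz s this, zero_mul]
    rw [h1, Ioc_eq_empty (by exact fun h => absurd h (not_lt.mpr ht.le)),
      Measure.restrict_empty, lintegral_zero_measure, ENNReal.toReal_zero]

lemma conv_lintegral_repr (f g : ℝ → ℝ) (hf : Measurable f) (hg : Measurable g) :
    ∀ t : ℝ, (∫⁻ s in Ioc 0 t, ENNReal.ofReal (f s * g (t - s)))
      = ∫⁻ s, ({p : ℝ × ℝ | 0 < p.2 ∧ p.2 ≤ p.1}.indicator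
          (fun p => ENNReal.ofReal (f p.2 * g (p.1 - p.2))) (t, s)) := by
  intro t
  rw [← lintegral_indicator measurableSet_Ioc]
  congr 1

lemma prod_meas (f g : ℝ → ℝ) (hf : Measurable f) (hg : Measurable g) :
    Measurable ({p : ℝ × ℝ | 0 < p.2 ∧ p.2 ≤ p.1}.indicator
      (fun p => ENNReal.ofReal (f p.2 * g (p.1 - p.2)))) := by
  apply Measurable.indicator
  · exact (ENNReal.measurable_ofReal.comp
      ((hf.comp measurable_snd).mul (hg.comp (measurable_fst.sub measurable_snd))))
  · exact MeasurableSet.inter (measurableSet_lt measurable_const measurable_snd)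
      (measurableSet_le measurable_snd measurable_fst)

lemma conv_meas (f g : ℝ → ℝ) (hf : Measurable f) (hg : Measurable g)
    (hfnn : ∀ t, 0 ≤ f t) (hgnn : ∀ t, 0 ≤ g t) (hfz : ∀ t < (0:ℝ), f t = 0) :
    Measurable (conv f g) := by
  have : conv f g = fun t => (∫⁻ s, ({p : ℝ × ℝ | 0 < p.2 ∧ p.2 ≤ p.1}.indicator
      (fun p => ENNReal.ofReal (f p.2 * g (p.1 - p.2))) (t, s))).toReal := by
    funext t
    rw [conv_repr f g hf hg hfnn hgnn hfz t, conv_lintegral_repr f g hf hg t]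
  rw [this]
  exact (Measurable.lintegral_prod_right' (prod_meas f g hf hg)).ennreal_toReal

lemma conv_nonneg' (f g : ℝ → ℝ) (hf : Measurable f) (hg : Measurable g)
    (hfnn : ∀ t, 0 ≤ f t) (hgnn : ∀ t, 0 ≤ g t) (hfz : ∀ t < (0:ℝ), f t = 0) (t : ℝ) :
    0 ≤ conv f g t := by
  rw [conv_repr f g hf hg hfnn hgnn hfz t]; exact ENNReal.toReal_nonneg

lemma conv_zero_neg (f g : ℝ → ℝ) (hf : Measurable f) (hg : Measurable g)
    (hfnn : ∀ t, 0 ≤ f t) (hgnn : ∀ t, 0 ≤ g t) (hfz : ∀ t < (0:ℝ), f t = 0)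
    (t : ℝ) (ht : t < 0) : conv f g t = 0 := by
  rw [conv_repr f g hf hg hfnn hgnn hfz t, Ioc_eq_empty (by exact fun h => absurd ht (not_lt.mpr h.le)),
    Measure.restrict_empty, lintegral_zero_measure, ENNReal.toReal_zero]

lemma shift_lintegral (g : ℝ → ℝ) (s : ℝ) :
    ∫⁻ t in Ici s, ENNReal.ofReal (g (t - s)) = ∫⁻ u in Ioi 0, ENNReal.ofReal (g u) := by
  have h := (measurePreserving_add_right (volume : Measure ℝ) s).setLIntegral_comp_preimage_emb
    (Homeomorph.addRight s).isClosedEmbedding.measurableEmbedding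
    (fun t => ENNReal.ofReal (g (t - s))) (Ici s)
  have hpre : (fun u => u + s) ⁻¹' Ici s = Ici 0 := by
    ext u; simp
  rw [hpre] at h
  simp only [add_sub_cancel_right] at h
  rw [← h]
  exact (setLIntegral_congr Ioi_ae_eq_Ici).symm

lemma sub_lintegral (g : ℝ → ℝ) (t a b : ℝ) (hab : 0 ≤ a) :
    ∫⁻ u in Ioc a b, ENNReal.ofReal (g (t - u)) = ∫⁻ v in Ico (t - b) (t - a), ENNReal.ofReal (g v) := by
  have h := (Measure.measurePreserving_sub_left (volume : Measure ℝ) t).setLIntegral_comp_preimage_emb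
    (Homeomorph.subLeft t).isClosedEmbedding.measurableEmbedding
    (fun v => ENNReal.ofReal (g v)) (Ico (t - b) (t - a))
  have hpre : (fun u => t - u) ⁻¹' Ico (t - b) (t - a) = Ioc a b := by
    ext u
    simp only [mem_preimage, mem_Ico, mem_Ioc]
    constructor
    · rintro ⟨h1, h2⟩; constructor <;> linarith
    · rintro ⟨h1, h2⟩; constructor <;> linarith
  rw [hpre] at h
  exact h

lemma conv_lintegral_le (f g : ℝ → ℝ) (hf : Measurable f) (hg : Measurable g)
    (hfnn : ∀ t, 0 ≤ f t) (hgnn : ∀ t, 0 ≤ g t) (hfz : ∀ t < (0:ℝ), f t = 0) :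
    ∫⁻ t in Ioi 0, ENNReal.ofReal (conv f g t)
      ≤ (∫⁻ s in Ioi 0, ENNReal.ofReal (f s)) * (∫⁻ s in Ioi 0, ENNReal.ofReal (g s)) := by
  set F : ℝ × ℝ → ENNReal := {p : ℝ × ℝ | 0 < p.2 ∧ p.2 ≤ p.1}.indicator
      (fun p => ENNReal.ofReal (f p.2 * g (p.1 - p.2))) with hF
  set Ig := ∫⁻ s in Ioi 0, ENNReal.ofReal (g s) with hIg
  have step1 : ∫⁻ t in Ioi 0, ENNReal.ofReal (conv f g t)
      ≤ ∫⁻ t in Ioi 0, ∫⁻ s, F (t, s) := by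
    apply lintegral_mono
    intro t
    show ENNReal.ofReal (conv f g t) ≤ ∫⁻ s, F (t, s)
    rw [conv_repr f g hf hg hfnn hgnn hfz t, conv_lintegral_repr f g hf hg t]
    exact ENNReal.ofReal_toReal_le
  have swap : ∫⁻ t in Ioi 0, ∫⁻ s, F (t, s) = ∫⁻ s, ∫⁻ t in Ioi 0, F (t, s) := by
    exact lintegral_lintegral_swap (prod_meas f g hf hg).aemeasurable
  have inner : ∀ s : ℝ, (∫⁻ t in Ioi 0, F (t, s))
      = (Ioi (0:ℝ)).indicator (fun s => ENNReal.ofReal (f s) * Ig) s := by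
    intro s
    by_cases hs : 0 < s
    · have hFeq : ∀ t : ℝ, F (t, s)
          = ENNReal.ofReal (f s) * (Ici s).indicator (fun t => ENNReal.ofReal (g (t - s))) t := by
        intro t
        by_cases hts : s ≤ t
        · rw [hF, indicator_of_mem (show (t,s) ∈ {p : ℝ × ℝ | 0 < p.2 ∧ p.2 ≤ p.1} from ⟨hs, hts⟩),
            indicator_of_mem (mem_Ici.mpr hts), ENNReal.ofReal_mul (hfnn s)]
        · rw [hF, indicator_of_notMem (show (t,s) ∉ {p : ℝ × ℝ | 0 < p.2 ∧ p.2 ≤ p.1} from fun h => hts h.2),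
            indicator_of_notMem (fun h => hts (mem_Ici.mp h)), mul_zero]
      simp_rw [hFeq]
      rw [lintegral_const_mul' _ _ ENNReal.ofReal_ne_top]
      rw [lintegral_indicator measurableSet_Ici, Measure.restrict_restrict measurableSet_Ici]
      have hII : Ici s ∩ Ioi (0:ℝ) = Ici s := inter_eq_left.mpr (fun x hx => lt_of_lt_of_le hs hx)
      rw [hII]
      rw [shift_lintegral g s, indicator_of_mem (mem_Ioi.mpr hs)]
    · have hFeq : ∀ t : ℝ, F (t, s) = 0 := by
        intro t
        rw [hF, indicator_of_notMem (show (t,s) ∉ {p : ℝ × ℝ | 0 < p.2 ∧ p.2 ≤ p.1} from fun h => hs h.1)]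
      simp_rw [hFeq]
      rw [lintegral_zero, indicator_of_notMem (fun h => hs (mem_Ioi.mp h))]
  calc ∫⁻ t in Ioi 0, ENNReal.ofReal (conv f g t)
      ≤ ∫⁻ s, ∫⁻ t in Ioi 0, F (t, s) := step1.trans (le_of_eq swap)
    _ = ∫⁻ s, (Ioi (0:ℝ)).indicator (fun s => ENNReal.ofReal (f s) * Ig) s := by
        simp_rw [inner]
    _ = ∫⁻ s in Ioi 0, ENNReal.ofReal (f s) * Ig := lintegral_indicator measurableSet_Ioi _
    _ = (∫⁻ s in Ioi 0, ENNReal.ofReal (f s)) * Ig :=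
        lintegral_mul_const _ (ENNReal.measurable_ofReal.comp hf)

lemma conv_bound (α : ℝ) (hα : 0 < α) (A B q : ℝ) (hA : 0 ≤ A) (hB : 0 ≤ B)
    (hq0 : 0 < q) (hq1 : q < 1) (f g : ℝ → ℝ) (hf : Measurable f) (hg : Measurable g)
    (hfnn : ∀ t, 0 ≤ f t) (hgnn : ∀ t, 0 ≤ g t) (hfz : ∀ t < (0:ℝ), f t = 0)
    (hfi : ∫⁻ t in Ioi 0, ENNReal.ofReal (f t) ≤ 1)
    (hgi : ∫⁻ t in Ioi 0, ENNReal.ofReal (g t) ≤ 1)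
    (hfb : ∀ t : ℝ, 0 < t → f t ≤ A * t ^ (-α))
    (hgb : ∀ t : ℝ, 0 < t → g t ≤ B * t ^ (-α)) :
    ∀ t : ℝ, 0 < t → conv f g t ≤ (A * q ^ (-α) + B * (1 - q) ^ (-α)) * t ^ (-α) := by
  intro t ht
  have hq1' : 0 < 1 - q := by linarith
  have hqt : 0 < q * t := mul_pos hq0 ht
  have hqt1 : 0 < (1 - q) * t := mul_pos hq1' ht
  set CA := A * (q * t) ^ (-α) with hCA
  set CB := B * ((1 - q) * t) ^ (-α) with hCB
  have hCAnn : 0 ≤ CA := mul_nonneg hA (Real.rpow_nonneg hqt.le _)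
  have hCBnn : 0 ≤ CB := mul_nonneg hB (Real.rpow_nonneg hqt1.le _)
  have key : (∫⁻ s in Ioc 0 t, ENNReal.ofReal (f s * g (t - s))) ≤ ENNReal.ofReal (CB + CA) := by
    have hsplit : Ioc (0:ℝ) t = Ioc 0 (q * t) ∪ Ioc (q * t) t :=
      (Ioc_union_Ioc_eq_Ioc hqt.le (by nlinarith)).symm
    rw [hsplit, lintegral_union measurableSet_Ioc (Ioc_disjoint_Ioc_of_le le_rfl),
      ENNReal.ofReal_add hCBnn hCAnn]
    gcongr
    · -- piece 1 ≤ ofReal CB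
      calc ∫⁻ s in Ioc 0 (q * t), ENNReal.ofReal (f s * g (t - s))
          ≤ ∫⁻ s in Ioc 0 (q * t), ENNReal.ofReal CB * ENNReal.ofReal (f s) := by
            apply setLIntegral_mono' measurableSet_Ioc
            intro s hs
            rw [← ENNReal.ofReal_mul hCBnn]
            apply ENNReal.ofReal_le_ofReal
            rw [mul_comm CB (f s)]
            apply mul_le_mul_of_nonneg_left _ (hfnn s)
            have hts : (1 - q) * t ≤ t - s := by
              have := hs.2; linarith
            calc g (t - s) ≤ B * (t - s) ^ (-α) := hgb _ (lt_of_lt_of_le hqt1 hts)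
              _ ≤ CB := by
                rw [hCB]
                exact mul_le_mul_of_nonneg_left
                  (Real.rpow_le_rpow_of_nonpos hqt1 hts (neg_nonpos.mpr hα.le)) hB
        _ = ENNReal.ofReal CB * ∫⁻ s in Ioc 0 (q * t), ENNReal.ofReal (f s) :=
            lintegral_const_mul' _ _ ENNReal.ofReal_ne_top
        _ ≤ ENNReal.ofReal CB * 1 := by
            apply mul_le_mul_right
            exact le_trans (lintegral_mono_set Ioc_subset_Ioi_self) hfi
        _ = ENNReal.ofReal CB := mul_one _
    · -- piece 2 ≤ ofReal CA
      calc ∫⁻ s in Ioc (q * t) t, ENNReal.ofReal (f s * g (t - s))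
          ≤ ∫⁻ s in Ioc (q * t) t, ENNReal.ofReal CA * ENNReal.ofReal (g (t - s)) := by
            apply setLIntegral_mono' measurableSet_Ioc
            intro s hs
            rw [← ENNReal.ofReal_mul hCAnn]
            apply ENNReal.ofReal_le_ofReal
            apply mul_le_mul_of_nonneg_right _ (hgnn _)
            calc f s ≤ A * s ^ (-α) := hfb _ (lt_trans hqt hs.1)
              _ ≤ CA := by
                rw [hCA]
                exact mul_le_mul_of_nonneg_left
                  (Real.rpow_le_rpow_of_nonpos hqt hs.1.le (neg_nonpos.mpr hα.le)) hA
        _ = ENNReal.ofReal CA * ∫⁻ s in Ioc (q * t) t, ENNReal.ofReal (g (t - s)) :=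
            lintegral_const_mul' _ _ ENNReal.ofReal_ne_top
        _ ≤ ENNReal.ofReal CA * 1 := by
            apply mul_le_mul_right
            rw [sub_lintegral g t (q * t) t hqt.le]
            calc ∫⁻ v in Ico (t - t) (t - q * t), ENNReal.ofReal (g v)
                ≤ ∫⁻ v in Ici (t - t), ENNReal.ofReal (g v) := lintegral_mono_set Ico_subset_Ici_self
              _ = ∫⁻ v in Ioi (0:ℝ), ENNReal.ofReal (g v) := by
                  rw [sub_self]
                  exact (setLIntegral_congr Ioi_ae_eq_Ici).symm
              _ ≤ 1 := hgi
        _ = ENNReal.ofReal CA := mul_one _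
  have halg : CB + CA = (A * q ^ (-α) + B * (1 - q) ^ (-α)) * t ^ (-α) := by
    rw [hCA, hCB, Real.mul_rpow hq0.le ht.le, Real.mul_rpow hq1'.le ht.le]
    ring
  rw [conv_repr f g hf hg hfnn hgnn hfz t]
  apply ENNReal.toReal_le_of_le_ofReal
  · rw [← halg]; exact add_nonneg hCBnn hCAnn
  · rw [← halg]; exact key

/-- Iterated convolution `G 0 ∗ G 1 ∗ ⋯ ∗ G n`. -/
noncomputable def iterConv (G : ℕ → ℝ → ℝ) : ℕ → ℝ → ℝ
  | 0 => G 0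
  | n + 1 => conv (iterConv G n) (G (n + 1))

lemma iter_props (α : ℝ) (hα : 0 < α) (n : ℕ)
    (K : ℕ → ℝ) (hK : ∀ i < n, 0 ≤ K i)
    (G : ℕ → ℝ → ℝ) (hm : ∀ i < n, Measurable (G i))
    (hnn : ∀ i < n, ∀ t, 0 ≤ G i t)
    (hz : ∀ i < n, ∀ t < (0:ℝ), G i t = 0)
    (hint : ∀ i < n, ∫⁻ t in Ioi (0:ℝ), ENNReal.ofReal (G i t) = 1)
    (hb : ∀ i < n, ∀ t, 0 < t → G i t ≤ K i * t ^ (-α))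
    (p : ℕ → ℝ) (hp : ∀ i < n, 0 < p i) :
    ∀ m, m < n →
      Measurable (iterConv G m) ∧ (∀ t, 0 ≤ iterConv G m t) ∧
      (∀ t < (0:ℝ), iterConv G m t = 0) ∧
      (∫⁻ t in Ioi (0:ℝ), ENNReal.ofReal (iterConv G m t) ≤ 1) ∧
      (∀ t : ℝ, 0 < t → iterConv G m t ≤
        (∑ i ∈ Finset.range (m + 1),
          K i * (p i / ∑ j ∈ Finset.range (m + 1), p j) ^ (-α)) * t ^ (-α)) := by
  intro m
  induction m with
  | zero =>
    intro h0
    refine ⟨hm 0 h0, hnn 0 h0, hz 0 h0, le_of_eq (hint 0 h0), ?_⟩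
    intro t ht
    have : (∑ i ∈ Finset.range 1, K i * (p i / ∑ j ∈ Finset.range 1, p j) ^ (-α))
        = K 0 := by
      rw [Finset.sum_range_one, Finset.sum_range_one, div_self (hp 0 h0).ne',
        Real.one_rpow, mul_one]
    rw [this]
    exact hb 0 h0 t ht
  | succ m ih =>
    intro hmn
    have hmn' : m < n := Nat.lt_of_succ_lt hmn
    obtain ⟨ihm, ihnn, ihz, ihi, ihb⟩ := ih hmn'
    set S := ∑ j ∈ Finset.range (m + 1), p j with hSdef
    set S' := ∑ j ∈ Finset.range (m + 2), p j with hS'def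
    have hS : 0 < S := Finset.sum_pos (fun i hi => hp i (lt_of_lt_of_le
      (Finset.mem_range.mp hi) (Nat.succ_le_of_lt hmn'))) ⟨0, Finset.mem_range.mpr (Nat.succ_pos m)⟩
    have hS'eq : S' = S + p (m + 1) := Finset.sum_range_succ p (m + 1)
    have hpm1 : 0 < p (m + 1) := hp (m + 1) hmn
    have hS' : 0 < S' := by rw [hS'eq]; positivity
    set C := ∑ i ∈ Finset.range (m + 1), K i * (p i / S) ^ (-α) with hCdef
    have hC : 0 ≤ C := Finset.sum_nonneg fun i hi => mul_nonneg
      (hK i (lt_of_lt_of_le (Finset.mem_range.mp hi) (Nat.succ_le_of_lt hmn')))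
      (Real.rpow_nonneg (div_nonneg ((hp i (lt_of_lt_of_le (Finset.mem_range.mp hi)
        (Nat.succ_le_of_lt hmn'))).le) hS.le) _)
    set q := S / S' with hqdef
    have hq0 : 0 < q := div_pos hS hS'
    have hq1 : q < 1 := (div_lt_one hS').mpr (by rw [hS'eq]; linarith)
    have h1q : 1 - q = p (m + 1) / S' := by
      rw [hqdef, hS'eq]; field_simp; ring
    have hgm : Measurable (G (m + 1)) := hm (m + 1) hmn
    have hgnn := hnn (m + 1) hmn
    have hgz := hz (m + 1) hmn
    have hgi : ∫⁻ t in Ioi (0:ℝ), ENNReal.ofReal (G (m + 1) t) ≤ 1 := le_of_eq (hint (m + 1) hmn)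
    have hgb := hb (m + 1) hmn
    have hconv : iterConv G (m + 1) = conv (iterConv G m) (G (m + 1)) := rfl
    have hKm1 : 0 ≤ K (m + 1) := hK (m + 1) hmn
    refine ⟨?_, ?_, ?_, ?_, ?_⟩
    · rw [hconv]; exact conv_meas _ _ ihm hgm ihnn hgnn ihz
    · rw [hconv]; exact conv_nonneg' _ _ ihm hgm ihnn hgnn ihz
    · rw [hconv]; exact conv_zero_neg _ _ ihm hgm ihnn hgnn ihz
    · rw [hconv]
      calc ∫⁻ t in Ioi (0:ℝ), ENNReal.ofReal (conv (iterConv G m) (G (m + 1)) t)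
          ≤ (∫⁻ s in Ioi (0:ℝ), ENNReal.ofReal (iterConv G m s))
            * (∫⁻ s in Ioi (0:ℝ), ENNReal.ofReal (G (m + 1) s)) :=
            conv_lintegral_le _ _ ihm hgm ihnn hgnn ihz
        _ ≤ 1 * 1 := mul_le_mul' ihi hgi
        _ = 1 := one_mul 1
    · intro t ht
      rw [hconv]
      have hb2 := conv_bound α hα C (K (m + 1)) q hC hKm1 hq0 hq1
        (iterConv G m) (G (m + 1)) ihm hgm ihnn hgnn ihz ihi hgi ihb hgb t ht
      refine le_trans hb2 (le_of_eq ?_)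
      congr 1
      rw [h1q, Finset.sum_range_succ, hCdef, Finset.sum_mul]
      congr 1
      apply Finset.sum_congr rfl
      intro i hi
      have hpi : 0 < p i := hp i (lt_of_lt_of_le (Finset.mem_range.mp hi)
        (Nat.succ_le_of_lt hmn'))
      rw [mul_assoc, ← Real.mul_rpow (div_nonneg hpi.le hS.le) hq0.le]
      congr 2
      rw [hqdef]
      field_simp

/-- Formula (3.50) in the proof of Lemma 3.8: the `n`-fold convolution
`G₁ ∗ ⋯ ∗ Gₙ` of nonnegative functions vanishing on `(-∞,0)` with integral one and
`Gᵢ t ≤ Kᵢ t^(-α)` satisfies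
`(G₁ ∗ ⋯ ∗ Gₙ)(t) ≤ (K₁ p₁^(-α) + ⋯ + Kₙ pₙ^(-α)) t^(-α)` for positive weights `pᵢ`
summing to one. -/
theorem convolution_n_fold_bound (α : ℝ) (hα : 0 < α) (n : ℕ) (hn : 1 ≤ n)
    (K : ℕ → ℝ) (hK : ∀ i < n, 0 ≤ K i)
    (G : ℕ → ℝ → ℝ) (hm : ∀ i < n, Measurable (G i))
    (hnn : ∀ i < n, ∀ t, 0 ≤ G i t)
    (hz : ∀ i < n, ∀ t < (0:ℝ), G i t = 0)
    (hint : ∀ i < n, ∫⁻ t in Ioi (0:ℝ), ENNReal.ofReal (G i t) = 1)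
    (hb : ∀ i < n, ∀ t, 0 < t → G i t ≤ K i * t ^ (-α)) :
    ∀ p : ℕ → ℝ, (∀ i < n, 0 < p i) → (∑ i ∈ Finset.range n, p i) = 1 →
      ∀ t : ℝ, 0 < t →
        iterConv G (n - 1) t ≤ (∑ i ∈ Finset.range n, K i * p i ^ (-α)) * t ^ (-α) := by
  intro p hp hps t ht
  have hn1 : n - 1 < n := Nat.sub_lt (Nat.lt_of_lt_of_le Nat.zero_lt_one hn) Nat.one_pos
  have hsucc : n - 1 + 1 = n := Nat.succ_pred_eq_of_pos (Nat.lt_of_lt_of_le Nat.zero_lt_one hn)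
  obtain ⟨_, _, _, _, hbd⟩ := iter_props α hα n K hK G hm hnn hz hint hb p hp (n - 1) hn1
  have := hbd t ht
  rw [hsucc, hps] at this
  simpa using this
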